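/- arXiv:1606.05336 — 3 statements merged into one kernel-verified Lean document; each statement's English description precedes it below -/
import Mathlib

section
/- Let H_1, ..., H_k be affine hyperplanes in ℝ^m, where each H_i = {x ∈ ℝ^m : α_i · x = β_i} with α_i ∈ ℝ^m nonzero and β_i ∈ ℝ. Then the number of connected components of ℝ^m \ (H_1 ∪ ... ∪ H_k) is at most ∑_{i=0}^{m} C(k, i), where C(k,i) denotes the binomial coefficient. -/
open Finset

/-- The set of sign vectors realized by points avoiding all the hyperplanes. -/
def Sgns (m k : ℕ) (α : Fin k → Fin m → ℝ) (β : Fin k → ℝ) : Set (Fin k → Bool) :=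
  {s | ∃ x : Fin m → ℝ, ∀ i, (∑ j, α i j * x j ≠ β i) ∧ s i = decide (∑ j, α i j * x j < β i)}

lemma sum_comb (m : ℕ) (a : Fin m → ℝ) (x z : Fin m → ℝ) (θ : ℝ) :
    ∑ j, a j * ((1 - θ) * x j + θ * z j)
      = (1 - θ) * ∑ j, a j * x j + θ * ∑ j, a j * z j := by
  rw [Finset.mul_sum, Finset.mul_sum, ← Finset.sum_add_distrib]
  exact Finset.sum_congr rfl fun j _ => by ring

lemma comb_lt {a b c θ : ℝ} (ha : a < c) (hb : b < c) (h0 : 0 ≤ θ) (h1 : θ ≤ 1) :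
    (1 - θ) * a + θ * b < c := by
  rcases eq_or_lt_of_le h1 with rfl | h1'
  · simpa using hb
  · nlinarith [mul_lt_mul_of_pos_left ha (by linarith : (0:ℝ) < 1 - θ),
      mul_le_mul_of_nonneg_left hb.le h0]

lemma comb_gt {a b c θ : ℝ} (ha : c < a) (hb : c < b) (h0 : 0 ≤ θ) (h1 : θ ≤ 1) :
    c < (1 - θ) * a + θ * b := by
  rcases eq_or_lt_of_le h1 with rfl | h1'
  · simpa using hb
  · nlinarith [mul_lt_mul_of_pos_left ha (by linarith : (0:ℝ) < 1 - θ),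
      mul_le_mul_of_nonneg_left hb.le h0]

/-- Pascal-type identity for partial sums of binomial coefficients. -/
lemma pascal_sum (k : ℕ) : ∀ n : ℕ,
    ∑ i ∈ range (n + 1), (k + 1).choose i
      = ∑ i ∈ range (n + 1), k.choose i + ∑ i ∈ range n, k.choose i := by
  intro n
  induction n with
  | zero => simp
  | succ n ih =>
    rw [Finset.sum_range_succ, ih, Nat.choose_succ_succ,
      Finset.sum_range_succ (fun i => k.choose i) (n + 1),
      Finset.sum_range_succ (fun i => k.choose i) n]
    ring

set_option maxHeartbeats 1000000 in
/-- The key combinatorial bound on the number of realized sign vectors,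
proved by deletion-restriction induction.  No nondegeneracy assumption. -/
lemma sgns_ncard_le (k : ℕ) : ∀ (m : ℕ) (α : Fin k → Fin m → ℝ) (β : Fin k → ℝ),
    (Sgns m k α β).ncard ≤ ∑ i ∈ range (m + 1), k.choose i := by
  induction k with
  | zero =>
    intro m α β
    have h1 : (Sgns m 0 α β).ncard ≤ (Set.univ : Set (Fin 0 → Bool)).ncard :=
      Set.ncard_le_ncard (Set.subset_univ _) Set.finite_univ
    have h2 : (Set.univ : Set (Fin 0 → Bool)).ncard = 1 := by
      rw [Set.ncard_univ]; simp [Nat.card_eq_fintype_card]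
    calc (Sgns m 0 α β).ncard ≤ 1 := by omega
      _ ≤ ∑ i ∈ range (m + 1), Nat.choose 0 i := by
          calc 1 = Nat.choose 0 0 := rfl
            _ ≤ _ := Finset.single_le_sum (f := fun i => Nat.choose 0 i)
                (fun i _ => Nat.zero_le _) (by simp)
  | succ k ih =>
    intro m α β
    -- bound `1` is always available on the RHS
    have hone : 1 ≤ ∑ i ∈ range (m + 1), (k + 1).choose i := by
      calc 1 = (k+1).choose 0 := rfl
        _ ≤ _ := Finset.single_le_sum (f := fun i => (k+1).choose i)
            (fun i _ => Nat.zero_le _) (by simp)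
    cases m with
    | zero =>
      -- dimension 0 : the sign vector set is a subsingleton
      have hsub : (Sgns 0 (k+1) α β).Subsingleton := by
        rintro s ⟨x, hx⟩ t ⟨y, hy⟩
        funext i
        have hxy : x = y := Subsingleton.elim x y
        rw [(hx i).2, (hy i).2, hxy]
      calc (Sgns 0 (k+1) α β).ncard ≤ 1 :=
            (Set.ncard_le_one (Set.toFinite _)).mpr fun a ha b hb => hsub ha hb
        _ ≤ _ := hone
    | succ m' =>
      set α' : Fin k → Fin (m' + 1) → ℝ := fun i => α i.castSucc with hα'
      set β' : Fin k → ℝ := fun i => β i.castSucc with hβ'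
      set A : Set (Fin k → Bool) :=
        {s' | Fin.snoc s' false ∈ Sgns (m'+1) (k+1) α β} with hA
      set B : Set (Fin k → Bool) :=
        {s' | Fin.snoc s' true ∈ Sgns (m'+1) (k+1) α β} with hB
      -- Step 1: Sgns is covered by snoc-images of A and B
      have hcover : Sgns (m'+1) (k+1) α β ⊆
          ((fun s' : Fin k → Bool => (Fin.snoc s' false : Fin (k+1) → Bool)) '' A) ∪ ((fun s' : Fin k → Bool => (Fin.snoc s' true : Fin (k+1) → Bool)) '' B) := by
        intro s hs
        rcases Bool.eq_false_or_eq_true (s (Fin.last k)) with h | h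
        · right; exact ⟨Fin.init s, by rwa [hB, Set.mem_setOf_eq, ← h, Fin.snoc_init_self],
            show Fin.snoc (Fin.init s) true = s by rw [← h, Fin.snoc_init_self]⟩
        · left; exact ⟨Fin.init s, by rwa [hA, Set.mem_setOf_eq, ← h, Fin.snoc_init_self],
            show Fin.snoc (Fin.init s) false = s by rw [← h, Fin.snoc_init_self]⟩
      have hsnoc_inj : ∀ b : Bool, Function.Injective
          (fun s' : Fin k → Bool => (Fin.snoc s' b : Fin (k+1) → Bool)) := by
        intro b s t hst
        funext i
        have := congrFun hst i.castSucc
        simpa [Fin.snoc_castSucc] using this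
      have hcount : (Sgns (m'+1) (k+1) α β).ncard ≤ A.ncard + B.ncard := by
        calc (Sgns (m'+1) (k+1) α β).ncard
            ≤ (((fun s' : Fin k → Bool => (Fin.snoc s' false : Fin (k+1) → Bool)) '' A) ∪
               ((fun s' : Fin k → Bool => (Fin.snoc s' true : Fin (k+1) → Bool)) '' B)).ncard :=
              Set.ncard_le_ncard hcover (Set.toFinite _)
          _ ≤ ((fun s' : Fin k → Bool => (Fin.snoc s' false : Fin (k+1) → Bool)) '' A).ncard +
              ((fun s' : Fin k → Bool => (Fin.snoc s' true : Fin (k+1) → Bool)) '' B).ncard := Set.ncard_union_le _ _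
          _ = A.ncard + B.ncard := by
              rw [Set.ncard_image_of_injective _ (hsnoc_inj false),
                Set.ncard_image_of_injective _ (hsnoc_inj true)]
      -- A ∪ B lands in the deleted arrangement's sign vectors
      have hAB_sub : A ∪ B ⊆ Sgns (m'+1) k α' β' := by
        rintro s' (hs' | hs') <;>
        · obtain ⟨x, hx⟩ := hs'
          refine ⟨x, fun i => ?_⟩
          have := hx i.castSucc
          simpa [hα', hβ', Fin.snoc_castSucc] using this
      -- A ∩ B lands in the restricted arrangement's sign vectors
      have hD : ∃ (α'' : Fin k → Fin m' → ℝ) (β'' : Fin k → ℝ),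
          A ∩ B ⊆ Sgns m' k α'' β'' := by
        by_cases hlast : α (Fin.last k) = 0
        · refine ⟨0, 0, ?_⟩
          rintro s' ⟨⟨x, hx⟩, ⟨z, hz⟩⟩
          exfalso
          have h1 := hx (Fin.last k)
          have h2 := hz (Fin.last k)
          rw [Fin.snoc_last] at h1 h2
          have hx0 : ∑ j, α (Fin.last k) j * x j = 0 := by simp [hlast]
          have hz0 : ∑ j, α (Fin.last k) j * z j = 0 := by simp [hlast]
          rw [hx0] at h1
          rw [hz0] at h2
          exact Bool.noConfusion (h1.2.trans h2.2.symm)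
        · obtain ⟨j0, hj0⟩ : ∃ j0, α (Fin.last k) j0 ≠ 0 := Function.ne_iff.mp hlast
          refine ⟨fun i j' => α i.castSucc (j0.succAbove j')
              - α i.castSucc j0 * α (Fin.last k) (j0.succAbove j') / α (Fin.last k) j0,
            fun i => β i.castSucc - α i.castSucc j0 * β (Fin.last k) / α (Fin.last k) j0, ?_⟩
          rintro s' ⟨⟨x, hx⟩, ⟨z, hz⟩⟩
          -- signs at the last hyperplane
          have hxL := hx (Fin.last k)
          have hzL := hz (Fin.last k)
          rw [Fin.snoc_last] at hxL hzL
          have hu : β (Fin.last k) < ∑ j, α (Fin.last k) j * x j := by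
            rcases lt_or_gt_of_ne hxL.1 with h | h
            · exfalso; have := hxL.2; simp [h] at this
            · exact h
          have hv : ∑ j, α (Fin.last k) j * z j < β (Fin.last k) := by
            rcases lt_or_gt_of_ne hzL.1 with h | h
            · exact h
            · exfalso; have := hzL.2; simp [h, not_lt.mpr (le_of_lt h)] at this
          set u := ∑ j, α (Fin.last k) j * x j with hu'
          set v := ∑ j, α (Fin.last k) j * z j with hv'
          set θ := (u - β (Fin.last k)) / (u - v) with hθ
          have huv : 0 < u - v := by linarith
          have hθ0 : 0 ≤ θ := div_nonneg (by linarith) (le_of_lt huv)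
          have hθ1 : θ ≤ 1 := by
            rw [hθ, div_le_one huv]; linarith
          set w : Fin (m'+1) → ℝ := fun j => (1 - θ) * x j + θ * z j with hw
          have hwsum : ∀ i : Fin (k+1), ∑ j, α i j * w j
              = (1 - θ) * ∑ j, α i j * x j + θ * ∑ j, α i j * z j :=
            fun i => sum_comb _ (α i) x z θ
          -- w lies on the last hyperplane
          have hwL : ∑ j, α (Fin.last k) j * w j = β (Fin.last k) := by
            rw [hwsum (Fin.last k), ← hu', ← hv', hθ]
            field_simp
            ring
          -- w has the right signs for the other hyperplanes
          have hwi : ∀ i : Fin k, (∑ j, α i.castSucc j * w j ≠ β i.castSucc) ∧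
              s' i = decide (∑ j, α i.castSucc j * w j < β i.castSucc) := by
            intro i
            have hxi := hx i.castSucc
            have hzi := hz i.castSucc
            rw [Fin.snoc_castSucc] at hxi hzi
            rw [hwsum i.castSucc]
            rcases Bool.eq_false_or_eq_true (s' i) with h | h
            · -- sign true : both below
              have hxlt : ∑ j, α i.castSucc j * x j < β i.castSucc := by
                rcases lt_or_gt_of_ne hxi.1 with h' | h'
                · exact h'
                · exfalso; have := hxi.2; rw [h] at this
                  simp [not_lt.mpr (le_of_lt h')] at this
              have hzlt : ∑ j, α i.castSucc j * z j < β i.castSucc := by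
                rcases lt_or_gt_of_ne hzi.1 with h' | h'
                · exact h'
                · exfalso; have := hzi.2; rw [h] at this
                  simp [not_lt.mpr (le_of_lt h')] at this
              have := comb_lt hxlt hzlt hθ0 hθ1
              exact ⟨ne_of_lt this, by simp [h, this]⟩
            · -- sign false : both above
              have hxgt : β i.castSucc < ∑ j, α i.castSucc j * x j := by
                rcases lt_or_gt_of_ne hxi.1 with h' | h' 
                · exfalso; have := hxi.2; rw [h] at this; simp [h'] at this
                · exact h'
              have hzgt : β i.castSucc < ∑ j, α i.castSucc j * z j := by
                rcases lt_or_gt_of_ne hzi.1 with h' | h'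
                · exfalso; have := hzi.2; rw [h] at this; simp [h'] at this
                · exact h'
              have := comb_gt hxgt hzgt hθ0 hθ1
              exact ⟨ne_of_gt this, by simp [h, not_lt.mpr (le_of_lt this)]⟩
          -- restrict w to the hyperplane coordinates
          refine ⟨fun j' => w (j0.succAbove j'), fun i => ?_⟩
          have hiden : ∑ j', (α i.castSucc (j0.succAbove j')
                - α i.castSucc j0 * α (Fin.last k) (j0.succAbove j') / α (Fin.last k) j0) * w (j0.succAbove j')
              - (β i.castSucc - α i.castSucc j0 * β (Fin.last k) / α (Fin.last k) j0)
              = ∑ j, α i.castSucc j * w j - β i.castSucc := by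
            have e1 : ∑ j, α i.castSucc j * w j
                = α i.castSucc j0 * w j0 + ∑ j', α i.castSucc (j0.succAbove j') * w (j0.succAbove j') :=
              Fin.sum_univ_succAbove (fun j => α i.castSucc j * w j) j0
            have e2 : β (Fin.last k) = α (Fin.last k) j0 * w j0 + ∑ j', α (Fin.last k) (j0.succAbove j') * w (j0.succAbove j') := by
              rw [← hwL]; exact Fin.sum_univ_succAbove (fun j => α (Fin.last k) j * w j) j0
            have e3 : ∑ j', (α i.castSucc (j0.succAbove j')
                  - α i.castSucc j0 * α (Fin.last k) (j0.succAbove j') / α (Fin.last k) j0) * w (j0.succAbove j')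
                = ∑ j', α i.castSucc (j0.succAbove j') * w (j0.succAbove j')
                  - (α i.castSucc j0 / α (Fin.last k) j0) *
                    ∑ j', α (Fin.last k) (j0.succAbove j') * w (j0.succAbove j') := by
              rw [Finset.mul_sum, ← Finset.sum_sub_distrib]
              exact Finset.sum_congr rfl fun j' _ => by field_simp
            rw [e3]
            have e4 : ∑ j', α (Fin.last k) (j0.succAbove j') * w (j0.succAbove j')
                = β (Fin.last k) - α (Fin.last k) j0 * w j0 := by linarith [e2]
            rw [e4, e1]
            field_simp
            ring
          have hwi' := hwi i
          constructor
          · intro hcontra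
            apply hwi'.1
            have : ∑ j, α i.castSucc j * w j - β i.castSucc = 0 := by
              rw [← hiden, hcontra]; ring
            linarith [this]
          · rw [hwi'.2, decide_eq_decide]
            constructor
            · intro h'; nlinarith [hiden]
            · intro h'; nlinarith [hiden]
      obtain ⟨α'', β'', hDsub⟩ := hD
      -- put the counting together
      have h1 : A.ncard + B.ncard = (A ∪ B).ncard + (A ∩ B).ncard :=
        (Set.ncard_union_add_ncard_inter A B (Set.toFinite _) (Set.toFinite _)).symm
      have h2 : (A ∪ B).ncard ≤ ∑ i ∈ range (m' + 1 + 1), k.choose i :=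
        le_trans (Set.ncard_le_ncard hAB_sub (Set.toFinite _)) (ih (m' + 1) α' β')
      have h3 : (A ∩ B).ncard ≤ ∑ i ∈ range (m' + 1), k.choose i :=
        le_trans (Set.ncard_le_ncard hDsub (Set.toFinite _)) (ih m' α'' β'')
      have h4 := pascal_sum k (m' + 1)
      omega

/-- **Upper bound on the number of regions of a hyperplane arrangement.**
Given `k` affine hyperplanes `{x ∈ ℝ^m : α i ⬝ x = β i}` (with each normal `α i` nonzero),
the number of connected components of the complement of their union is at most
`∑_{i=0}^{m} C(k, i)`. -/
theorem regions_of_hyperplane_arrangement_le (m k : ℕ)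
    (α : Fin k → (Fin m → ℝ)) (β : Fin k → ℝ) (hα : ∀ i, α i ≠ 0) :
    Nat.card (ConnectedComponents
        {x : Fin m → ℝ | ∀ i : Fin k, ∑ j, α i j * x j ≠ β i}) ≤
      ∑ i ∈ Finset.range (m + 1), Nat.choose k i := by
  classical
  set R : Set (Fin m → ℝ) := {x | ∀ i : Fin k, ∑ j, α i j * x j ≠ β i} with hR
  -- the sign map
  set sgn : R → (Fin k → Bool) := fun x i => decide (∑ j, α i j * x.1 j < β i) with hsgn
  have hsgn_mem : ∀ x : R, sgn x ∈ Sgns m k α β := fun x => ⟨x.1, fun i => ⟨x.2 i, rfl⟩⟩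
  -- points with the same sign vector are in the same connected component
  have key : ∀ x y : R, sgn x = sgn y →
      (ConnectedComponents.mk x = ConnectedComponents.mk y) := by
    intro x y hxy
    have hlin : ∀ i : Fin k, IsLinearMap ℝ (fun p : Fin m → ℝ => ∑ j, α i j * p j) := by
      intro i
      constructor
      · intro p q; rw [← Finset.sum_add_distrib]
        exact Finset.sum_congr rfl fun j _ => by simp [mul_add]
      · intro c p; rw [Finset.smul_sum]
        exact Finset.sum_congr rfl fun j _ => by simp [smul_eq_mul]; ring
    set W : Set (Fin m → ℝ) :=
      ⋂ i : Fin k, {p | if sgn x i then ∑ j, α i j * p j < β i else β i < ∑ j, α i j * p j}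
      with hW
    have hWconv : Convex ℝ W := by
      apply convex_iInter
      intro i
      by_cases h : sgn x i = true
      · simp only [if_pos h]; exact convex_halfSpace_lt (hlin i) (β i)
      · simp only [if_neg h]; exact convex_halfSpace_gt (hlin i) (β i)
    have hmemW : ∀ z : R, sgn z = sgn x → z.1 ∈ W := by
      intro z hz
      rw [hW, Set.mem_iInter]
      intro i
      by_cases h : sgn x i = true
      · rw [Set.mem_setOf_eq, if_pos h]
        have h2 : sgn z i = true := by rw [hz, h]
        exact of_decide_eq_true h2
      · rw [Set.mem_setOf_eq, if_neg h]
        have h2 : sgn z i ≠ true := by rw [hz]; exact h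
        have h3 : ¬ (∑ j, α i j * z.1 j < β i) := fun hlt => h2 (decide_eq_true hlt)
        exact lt_of_le_of_ne (not_lt.mp h3) (Ne.symm (z.2 i))
    have hxW : x.1 ∈ W := hmemW x rfl
    have hyW : y.1 ∈ W := hmemW y hxy.symm
    have hWR : W ⊆ R := by
      intro p hp
      rw [hW, Set.mem_iInter] at hp
      intro i
      have := hp i
      by_cases h : sgn x i = true
      · rw [Set.mem_setOf_eq, if_pos h] at this; exact ne_of_lt this
      · rw [Set.mem_setOf_eq, if_neg h] at this; exact ne_of_gt this
    -- transfer connectedness into the subtype R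
    have hWpre : PreconnectedSpace W := Subtype.preconnectedSpace hWconv.isPreconnected
    have hcont : Continuous (Set.inclusion hWR) := continuous_inclusion hWR
    have hrange : IsPreconnected (Set.range (Set.inclusion hWR)) := isPreconnected_range hcont
    have hxr : x ∈ Set.range (Set.inclusion hWR) := ⟨⟨x.1, hxW⟩, rfl⟩
    have hyr : y ∈ Set.range (Set.inclusion hWR) := ⟨⟨y.1, hyW⟩, rfl⟩
    have hsub := hrange.subset_connectedComponent hyr
    have : x ∈ connectedComponent y := hsub hxr
    exact ConnectedComponents.coe_eq_coe'.mpr this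
  -- the surjection from realized sign vectors onto connected components
  have hsurj : ∃ F : (Sgns m k α β) → ConnectedComponents R, Function.Surjective F := by
    refine ⟨fun s => ConnectedComponents.mk ⟨s.2.choose, fun i => (s.2.choose_spec i).1⟩, ?_⟩
    intro c
    obtain ⟨x, rfl⟩ := ConnectedComponents.surjective_coe c
    refine ⟨⟨sgn x, hsgn_mem x⟩, ?_⟩
    apply key
    funext i
    have := ((hsgn_mem x : (sgn x) ∈ Sgns m k α β).choose_spec i).2
    exact this.symm
  obtain ⟨F, hF⟩ := hsurj
  have hfin : Finite (Sgns m k α β) := Set.toFinite _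
  calc Nat.card (ConnectedComponents R) ≤ Nat.card (Sgns m k α β) :=
        Nat.card_le_card_of_surjective F hF
    _ = (Sgns m k α β).ncard := Nat.card_coe_set_eq _
    _ ≤ ∑ i ∈ Finset.range (m + 1), Nat.choose k i := sgns_ncard_le k m α β
end

section
/- Let F : ℝ^m → ℝ^k be a ReLU network with n hidden layers of width k. Then the number of distinct activation patterns realized by F as the input ranges over all of ℝ^m is at most (∑_{i=0}^{m} C(k,i))^n; in particular it is O(k^{mn}), uniformly over all choices of the weights and biases. -/
/-- Preactivations of a ReLU network: `h^{(0)} = W^{(0)} x + b^{(0)}`, and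
`h^{(d+1)} = W^{(d+1)} (ReLU h^{(d)}) + b^{(d+1)}`, where `ReLU u = max u 0` is applied
coordinatewise.  `W0` is the input-layer weight matrix, `W d` the weight matrix into hidden
layer `d` (for `d ≥ 1`), and `b d` the bias of hidden layer `d`. -/
noncomputable def reluPreact {m k : ℕ} (W0 : Matrix (Fin k) (Fin m) ℝ)
    (W : ℕ → Matrix (Fin k) (Fin k) ℝ) (b : ℕ → Fin k → ℝ) (x : Fin m → ℝ) :
    ℕ → Fin k → ℝ
  | 0 => W0.mulVec x + b 0
  | d + 1 => (W (d + 1)).mulVec (fun i => max (reluPreact W0 W b x d i) 0) + b (d + 1)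

/-- The activation pattern of a ReLU network at input `x`: for every hidden neuron (layer
`d < n`, index `i < k`) it records whether the preactivation `h^{(d)}_i` is positive. -/
noncomputable def reluActivationPattern (m k n : ℕ) (W0 : Matrix (Fin k) (Fin m) ℝ)
    (W : ℕ → Matrix (Fin k) (Fin k) ℝ) (b : ℕ → Fin k → ℝ) (x : Fin m → ℝ) :
    Fin n → Fin k → Bool :=
  fun d i => decide (0 < reluPreact W0 W b x d i)



def Aff {m : ℕ} (f : (Fin m → ℝ) → ℝ) : Prop :=
  ∃ a : Fin m → ℝ, ∃ c : ℝ, ∀ x, f x = (∑ j, a j * x j) + c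

lemma aff_line {m : ℕ} {h : (Fin m → ℝ) → ℝ} (hh : Aff h) (x y : Fin m → ℝ) (t : ℝ) :
    h (fun l => x l + t * (y l - x l)) = h x + t * (h y - h x) := by
  obtain ⟨a, c, hac⟩ := hh
  simp only [hac]
  have : ∀ l : Fin m, a l * (x l + t * (y l - x l))
      = a l * x l + (t * (a l * y l) - t * (a l * x l)) := by intro l; ring
  rw [Finset.sum_congr rfl (fun l _ => this l), Finset.sum_add_distrib,
    Finset.sum_sub_distrib, ← Finset.mul_sum, ← Finset.mul_sum]
  ring

lemma pascal (k m : ℕ) : ∑ i ∈ Finset.range (m+2), (k+1).choose i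
    = ∑ i ∈ Finset.range (m+2), k.choose i + ∑ i ∈ Finset.range (m+1), k.choose i := by
  rw [Finset.sum_range_succ']
  simp only [Nat.choose_succ_succ]
  rw [Finset.sum_add_distrib, Finset.sum_range_succ' (fun i => k.choose i) (m+1)]
  simp only [Nat.choose_zero_right]
  ring

lemma one_le_B (k m : ℕ) : 1 ≤ ∑ i ∈ Finset.range (m+1), k.choose i :=
  calc 1 = k.choose 0 := (Nat.choose_zero_right k).symm
  _ ≤ _ := Finset.single_le_sum (f := fun i => k.choose i) (fun _ _ => Nat.zero_le _)
      (Finset.mem_range.mpr (Nat.succ_pos m))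

lemma convex_pos {a b t : ℝ} (ha : 0 < a) (hb : 0 < b) (ht0 : 0 ≤ t) (ht1 : t ≤ 1) :
    0 < a + t * (b - a) := by
  rcases le_total a b with h | h
  · nlinarith [mul_nonneg ht0 (sub_nonneg.mpr h)]
  · nlinarith [mul_nonneg (sub_nonneg.mpr ht1) (sub_nonneg.mpr h)]

lemma convex_nonpos {a b t : ℝ} (ha : a ≤ 0) (hb : b ≤ 0) (ht0 : 0 ≤ t) (ht1 : t ≤ 1) :
    a + t * (b - a) ≤ 0 := by
  rcases le_total a b with h | h
  · nlinarith [mul_nonneg (sub_nonneg.mpr ht1) (sub_nonneg.mpr h)]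
  · nlinarith [mul_nonneg ht0 (sub_nonneg.mpr h)]

lemma ncard_range_le_one {α β : Type*} [Subsingleton α] [Inhabited α] (f : α → β) :
    (Set.range f).ncard ≤ 1 := by
  have h : Set.range f ⊆ {f default} := by rintro _ ⟨x, rfl⟩; simp [Subsingleton.elim x default]
  exact le_trans (Set.ncard_le_ncard h (Set.finite_singleton _)) (by simp)

lemma ncard_le_one_of_subsingleton {α : Type*} [Subsingleton α] (s : Set α) : s.ncard ≤ 1 :=
  le_trans (Set.ncard_le_ncard (Set.subset_univ s) (Set.toFinite _))
    (by rw [Set.ncard_univ]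
        exact Nat.card_le_card_of_injective (fun x : α => ())
          (fun a b _ => Subsingleton.elim a b) |>.trans (by simp))

/-- Core lemma: the number of strict-positivity patterns of `k` affine functions on `ℝ^m`
is at most `∑_{i=0}^m C(k,i)`. -/
theorem core_patterns (k : ℕ) : ∀ (m : ℕ) (f : Fin k → (Fin m → ℝ) → ℝ), (∀ i, Aff (f i)) →
    (Set.range (fun x i => decide (0 < f i x))).ncard ≤ ∑ i ∈ Finset.range (m+1), k.choose i := by
  induction k with
  | zero =>
    intro m f _
    refine le_trans (ncard_le_one_of_subsingleton _) (one_le_B 0 m)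
  | succ k IH =>
    intro m f hf
    match m with
    | 0 =>
      refine le_trans (ncard_range_le_one _) (one_le_B (k+1) 0)
    | m + 1 =>
      classical
      set g : Fin k → (Fin (m+1) → ℝ) → ℝ := fun i => f i.castSucc with hg
      set fl : (Fin (m+1) → ℝ) → ℝ := f (Fin.last k) with hfl
      obtain ⟨a, c, hac⟩ := hf (Fin.last k)
      set patf : (Fin (m+1) → ℝ) → (Fin (k+1) → Bool) := fun x i => decide (0 < f i x) with hpatf
      set patg : (Fin (m+1) → ℝ) → (Fin k → Bool) := fun x i => decide (0 < g i x) with hpatg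
      set S : Finset (Fin (k+1) → Bool) := (Set.toFinite (Set.range patf)).toFinset with hS
      set T : Finset (Fin k → Bool) := (Set.toFinite (Set.range patg)).toFinset with hT
      set D : Finset (Fin k → Bool) := T.filter
        (fun q => (∃ x, patg x = q ∧ 0 < fl x) ∧ (∃ y, patg y = q ∧ fl y ≤ 0)) with hD
      have hres : ∀ x, (patf x) ∘ Fin.castSucc = patg x := fun x => rfl
      -- Step 1 : S.card ≤ T.card + D.card
      have step1 : S.card ≤ T.card + D.card := by
        have hmap : ∀ p ∈ S, (p ∘ Fin.castSucc) ∈ T := by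
          intro p hp
          rw [hS, Set.Finite.mem_toFinset] at hp
          obtain ⟨x, rfl⟩ := hp
          rw [hT, Set.Finite.mem_toFinset, hres]
          exact ⟨x, rfl⟩
        rw [Finset.card_eq_sum_card_fiberwise hmap]
        have fib : ∀ q ∈ T, (S.filter (fun p => p ∘ Fin.castSucc = q)).card
            ≤ 1 + (if q ∈ D then 1 else 0) := by
          intro q hq
          by_cases hqD : q ∈ D
          · simp only [hqD, if_true]
            refine le_trans (Finset.card_le_card (t := {Fin.snoc q true, Fin.snoc q false}) ?_)
              (le_trans (Finset.card_insert_le _ _) (by simp))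
            intro p hp
            rw [Finset.mem_filter] at hp
            have hpe : p = Fin.snoc q (p (Fin.last k)) := by
              funext i
              induction i using Fin.lastCases with
              | last => simp
              | cast j => rw [Fin.snoc_castSucc, ← hp.2]; rfl
            rcases Bool.eq_false_or_eq_true (p (Fin.last k)) with h | h <;>
              · rw [hpe, h]; simp
          · simp only [hqD, if_false]
            rw [Finset.card_le_one]
            intro p1 hp1 p2 hp2
            rw [Finset.mem_filter] at hp1 hp2
            by_contra hne
            have hlast : p1 (Fin.last k) ≠ p2 (Fin.last k) := by
              intro heq
              apply hne
              funext i
              induction i using Fin.lastCases with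
              | last => exact heq
              | cast j =>
                have := congrFun (hp1.2.trans hp2.2.symm) j
                exact this
            -- one of them has last = true, other false
            have key : ∀ p ∈ S, p ∘ Fin.castSucc = q → ∃ x, patg x = q ∧
                (p (Fin.last k) = true → 0 < fl x) ∧ (p (Fin.last k) = false → fl x ≤ 0) := by
              intro p hp hpq
              rw [hS, Set.Finite.mem_toFinset] at hp
              obtain ⟨x, rfl⟩ := hp
              refine ⟨x, by rw [← hres, hpq], ?_, ?_⟩
              · intro h
                have : patf x (Fin.last k) = true := h
                simpa [hpatf] using this
              · intro h
                have : patf x (Fin.last k) = false := h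
                simp only [hpatf, decide_eq_false_iff_not, not_lt] at this
                exact this
            obtain ⟨x1, hx1q, hx1t, hx1f⟩ := key p1 hp1.1 hp1.2
            obtain ⟨x2, hx2q, hx2t, hx2f⟩ := key p2 hp2.1 hp2.2
            apply hqD
            rw [hD, Finset.mem_filter]
            refine ⟨hq, ?_⟩
            rcases Bool.eq_false_or_eq_true (p1 (Fin.last k)) with h1 | h1
            · have h2 : p2 (Fin.last k) = false := by
                rcases Bool.eq_false_or_eq_true (p2 (Fin.last k)) with h2 | h2
                · exact absurd (h1.trans h2.symm) hlast
                · exact h2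
              exact ⟨⟨x1, hx1q, hx1t h1⟩, ⟨x2, hx2q, hx2f h2⟩⟩
            · have h2 : p2 (Fin.last k) = true := by
                rcases Bool.eq_false_or_eq_true (p2 (Fin.last k)) with h2 | h2
                · exact h2
                · exact absurd (h1.trans h2.symm) hlast
              exact ⟨⟨x2, hx2q, hx2t h2⟩, ⟨x1, hx1q, hx1f h1⟩⟩
        calc ∑ q ∈ T, (S.filter (fun p => p ∘ Fin.castSucc = q)).card
            ≤ ∑ q ∈ T, (1 + (if q ∈ D then 1 else 0)) := Finset.sum_le_sum fib
          _ = T.card + D.card := by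
            rw [Finset.sum_add_distrib, Finset.sum_ite_mem, Finset.sum_const, Finset.sum_const]
            have : T ∩ D = D := Finset.inter_eq_right.mpr (Finset.filter_subset _ _)
            simp [this]
      -- Step 2 : D.card ≤ ∑ i ∈ range (m+1), k.choose i
      have step2 : D.card ≤ ∑ i ∈ Finset.range (m+1), k.choose i := by
        rcases Finset.eq_empty_or_nonempty D with hDe | hDne
        · simp [hDe]
        · obtain ⟨q0, hq0⟩ := hDne
          rw [hD, Finset.mem_filter] at hq0
          obtain ⟨-, ⟨x0, -, hx0⟩, ⟨y0, -, hy0⟩⟩ := hq0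
          have hacfl : ∀ x, fl x = (∑ j, a j * x j) + c := hac
          have hanz : ∃ j, a j ≠ 0 := by
            by_contra hno
            push_neg at hno
            have h1 : fl x0 = c := by rw [hacfl]; simp [hno]
            have h2 : fl y0 = c := by rw [hacfl]; simp [hno]
            rw [h1] at hx0; rw [h2] at hy0; linarith
          obtain ⟨j, hj⟩ := hanz
          set sfun : (Fin m → ℝ) → ℝ :=
            fun u => (-c - ∑ l, a (j.succAbove l) * u l) / a j with hsfun
          set e : (Fin m → ℝ) → (Fin (m+1) → ℝ) := fun u => j.insertNth (sfun u) u with he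
          have he_same : ∀ u, e u j = sfun u := fun u => by simp [he]
          have he_above : ∀ u l, e u (j.succAbove l) = u l := fun u l => by simp [he]
          set f' : Fin k → (Fin m → ℝ) → ℝ := fun i u => g i (e u) with hf'
          have hf'aff : ∀ i, Aff (f' i) := by
            intro i
            obtain ⟨a', c', h'⟩ := hf i.castSucc
            refine ⟨fun l => a' (j.succAbove l) - a' j * a (j.succAbove l) / a j,
              c' - a' j * c / a j, ?_⟩
            intro u
            have hsum : ∑ l : Fin (m+1), a' l * (e u) l
                = a' j * sfun u + ∑ l : Fin m, a' (j.succAbove l) * u l := by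
              rw [Fin.sum_univ_succAbove (fun l => a' l * (e u) l) j]
              simp [he_same, he_above]
            show f i.castSucc (e u) = _
            rw [h', hsum]
            have hs2 : ∀ l : Fin m, (a' (j.succAbove l) - a' j * a (j.succAbove l) / a j) * u l
                = a' (j.succAbove l) * u l - (a' j / a j) * (a (j.succAbove l) * u l) := by
              intro l; ring
            rw [Finset.sum_congr rfl (fun l _ => hs2 l), Finset.sum_sub_distrib,
              ← Finset.mul_sum]
            simp only [hsfun]
            set A1 := ∑ l, a' (j.succAbove l) * u l
            set A2 := ∑ l, a (j.succAbove l) * u l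
            field_simp
            ring
          have he0 : ∀ u, fl (e u) = 0 := by
            intro u
            rw [hacfl, Fin.sum_univ_succAbove (fun l => a l * (e u) l) j]
            simp only [he_same, he_above, hsfun]
            set A2 := ∑ l, a (j.succAbove l) * u l
            field_simp
            ring
          have hDsub : D ⊆
              (Set.toFinite (Set.range (fun u (i : Fin k) => decide (0 < f' i u)))).toFinset := by
            intro q hqD
            rw [hD, Finset.mem_filter] at hqD
            obtain ⟨-, ⟨x, hxq, hxpos⟩, ⟨y, hyq, hyneg⟩⟩ := hqD
            have hd : 0 < fl x - fl y := by linarith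
            set t : ℝ := fl x / (fl x - fl y) with ht
            have ht0 : 0 ≤ t := div_nonneg hxpos.le hd.le
            have ht1 : t ≤ 1 := by rw [ht, div_le_one hd]; linarith
            set z : Fin (m+1) → ℝ := fun l => x l + t * (y l - x l) with hz
            have hflz : fl z = 0 := by
              rw [hz, aff_line ⟨a, c, hacfl⟩ x y t, ht]
              field_simp
              ring
            have hgz : ∀ i, g i z = g i x + t * (g i y - g i x) := by
              intro i
              rw [hz]; exact aff_line (hf i.castSucc) x y t
            have hpatz : patg z = q := by
              funext i
              have hxi : patg x i = q i := congrFun hxq i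
              have hyi : patg y i = q i := congrFun hyq i
              rcases Bool.eq_false_or_eq_true (q i) with hqi | hqi
              · rw [hqi]
                rw [hqi] at hxi hyi
                simp only [hpatg, decide_eq_true_eq] at hxi hyi ⊢
                rw [hgz i]
                exact convex_pos hxi hyi ht0 ht1
              · rw [hqi]
                rw [hqi] at hxi hyi
                simp only [hpatg, decide_eq_false_iff_not, not_lt] at hxi hyi ⊢
                rw [hgz i]
                exact convex_nonpos hxi hyi ht0 ht1
            set u : Fin m → ℝ := fun l => z (j.succAbove l) with hu
            have hzj : z j = sfun u := by
              have h0 := hflz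
              rw [hacfl, Fin.sum_univ_succAbove (fun l => a l * z l) j] at h0
              have : ∑ l, a (j.succAbove l) * u l = ∑ l, a (j.succAbove l) * z (j.succAbove l) := rfl
              rw [hsfun]
              simp only [this]
              field_simp
              linarith
            have hez : e u = z := by
              funext i
              by_cases hi : i = j
              · rw [hi, he_same, hzj]
              · obtain ⟨l, hl⟩ := Fin.exists_succAbove_eq hi
                rw [← hl, he_above]
            rw [Set.Finite.mem_toFinset]
            refine ⟨u, ?_⟩
            funext i
            show decide (0 < g i (e u)) = q i
            rw [hez, ← hpatz]
          calc D.card ≤ _ := Finset.card_le_card hDsub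
            _ = (Set.range (fun u (i : Fin k) => decide (0 < f' i u))).ncard :=
              (Set.ncard_eq_toFinset_card _ _).symm
            _ ≤ _ := IH m f' hf'aff
      -- conclude
      have hT2 : T.card ≤ ∑ i ∈ Finset.range (m+2), k.choose i := by
        calc T.card = (Set.range patg).ncard := (Set.ncard_eq_toFinset_card _ _).symm
          _ ≤ _ := IH (m+1) g (fun i => hf i.castSucc)
      calc (Set.range patf).ncard = S.card := Set.ncard_eq_toFinset_card _ _
        _ ≤ T.card + D.card := step1
        _ ≤ (∑ i ∈ Finset.range (m+2), k.choose i) + (∑ i ∈ Finset.range (m+1), k.choose i) :=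
          add_le_add hT2 step2
        _ = _ := (pascal k m).symm



/-- Affine data `(M, v)` of layer `d` preactivations, assuming pattern `P`. -/
noncomputable def affData {m k : ℕ} (W0 : Matrix (Fin k) (Fin m) ℝ)
    (W : ℕ → Matrix (Fin k) (Fin k) ℝ) (b : ℕ → Fin k → ℝ) (P : ℕ → Fin k → Bool) :
    ℕ → Matrix (Fin k) (Fin m) ℝ × (Fin k → ℝ)
  | 0 => (W0, b 0)
  | d + 1 =>
      (W (d+1) * Matrix.diagonal (fun i => if P d i then (1:ℝ) else 0) * (affData W0 W b P d).1,
       (W (d+1)).mulVec (fun i => if P d i then (affData W0 W b P d).2 i else 0) + b (d+1))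

lemma reluPreact_eq_affine {m k : ℕ} (W0 : Matrix (Fin k) (Fin m) ℝ)
    (W : ℕ → Matrix (Fin k) (Fin k) ℝ) (b : ℕ → Fin k → ℝ) (P : ℕ → Fin k → Bool)
    (x : Fin m → ℝ) :
    ∀ d, (∀ d' i, d' < d → (0 < reluPreact W0 W b x d' i ↔ P d' i = true)) →
      reluPreact W0 W b x d = (affData W0 W b P d).1.mulVec x + (affData W0 W b P d).2 := by
  intro d
  induction d with
  | zero => intro _; simp [reluPreact, affData]
  | succ d ih =>
    intro h
    have hd := ih (fun d' i hd' => h d' i (Nat.lt_succ_of_lt hd'))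
    show (W (d+1)).mulVec (fun i => max (reluPreact W0 W b x d i) 0) + b (d+1) = _
    have hmask : (fun i => max (reluPreact W0 W b x d i) 0)
        = (Matrix.diagonal (fun i => if P d i then (1:ℝ) else 0)).mulVec
            ((affData W0 W b P d).1.mulVec x)
          + (fun i => if P d i then (affData W0 W b P d).2 i else 0) := by
      funext i
      have hiff := h d i (Nat.lt_succ_self d)
      simp only [Pi.add_apply, Matrix.mulVec_diagonal]
      by_cases hp : P d i = true
      · have hpos : 0 < reluPreact W0 W b x d i := hiff.mpr hp
        rw [max_eq_left hpos.le, hd]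
        simp [hp]
      · have hnp : ¬ 0 < reluPreact W0 W b x d i := fun hc => hp (hiff.mp hc)
        rw [max_eq_right (not_lt.mp hnp)]
        simp [hp]
    rw [hmask, Matrix.mulVec_add, Matrix.mulVec_mulVec, Matrix.mulVec_mulVec]
    show _ = (W (d+1) * _ * (affData W0 W b P d).1).mulVec x
        + ((W (d+1)).mulVec (fun i => if P d i then (affData W0 W b P d).2 i else 0) + b (d+1))
    rw [Matrix.mul_assoc]
    abel

theorem main_count {m k : ℕ} (W0 : Matrix (Fin k) (Fin m) ℝ)
    (W : ℕ → Matrix (Fin k) (Fin k) ℝ) (b : ℕ → Fin k → ℝ) : ∀ n : ℕ,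
    (Set.range (fun (x : Fin m → ℝ) (d : Fin n) (i : Fin k) =>
        decide (0 < reluPreact W0 W b x d i))).ncard
      ≤ (∑ i ∈ Finset.range (m + 1), Nat.choose k i) ^ n := by
  intro n
  induction n with
  | zero =>
    exact le_trans (ncard_le_one_of_subsingleton (α := Fin 0 → Fin k → Bool) _) (by simp)
  | succ n ih =>
    classical
    set B := ∑ i ∈ Finset.range (m + 1), Nat.choose k i with hB
    set fpn : (Fin m → ℝ) → (Fin n → Fin k → Bool) :=
      fun x d i => decide (0 < reluPreact W0 W b x d i) with hfpn
    set fps : (Fin m → ℝ) → (Fin (n+1) → Fin k → Bool) :=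
      fun x d i => decide (0 < reluPreact W0 W b x d i) with hfps
    set ρ : (Fin (n+1) → Fin k → Bool) → (Fin n → Fin k → Bool) × (Fin k → Bool) :=
      fun p => (fun d => p d.castSucc, p (Fin.last n)) with hρ
    have hρinj : Function.Injective ρ := by
      intro p1 p2 hp
      have h1 := congrArg Prod.fst hp
      have h2 := congrArg Prod.snd hp
      funext d
      induction d using Fin.lastCases with
      | last => exact h2
      | cast j => exact congrFun h1 j
    have himg : (Set.range fps).ncard = (Set.range (ρ ∘ fps)).ncard := by
      rw [Set.range_comp, Set.ncard_image_of_injective _ hρinj]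
    rw [show (Set.range fun (x : Fin m → ℝ) (d : Fin (n+1)) (i : Fin k) =>
        decide (0 < reluPreact W0 W b x d i)) = Set.range fps from rfl, himg]
    -- finset bookkeeping
    set SG := (Set.toFinite (Set.range (ρ ∘ fps))).toFinset with hSG
    set SN := (Set.toFinite (Set.range fpn)).toFinset with hSN
    set Pext : (Fin n → Fin k → Bool) → ℕ → Fin k → Bool :=
      fun P d i => if h : d < n then P ⟨d, h⟩ i else true with hPext
    set RP : (Fin n → Fin k → Bool) → Finset (Fin k → Bool) := fun P =>
      (Set.toFinite (Set.range (fun (x : Fin m → ℝ) (i : Fin k) =>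
        decide (0 < ((affData W0 W b (Pext P) n).1.mulVec x
          + (affData W0 W b (Pext P) n).2) i)))).toFinset with hRP
    have hsub : SG ⊆ SN.biUnion (fun P => {P} ×ˢ RP P) := by
      intro pr hpr
      rw [hSG, Set.Finite.mem_toFinset] at hpr
      obtain ⟨x, rfl⟩ := hpr
      rw [Finset.mem_biUnion]
      refine ⟨fpn x, by rw [hSN, Set.Finite.mem_toFinset]; exact ⟨x, rfl⟩, ?_⟩
      rw [Finset.mem_product]
      constructor
      · exact Finset.mem_singleton.mpr rfl
      · have haff : reluPreact W0 W b x n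
            = (affData W0 W b (Pext (fpn x)) n).1.mulVec x
              + (affData W0 W b (Pext (fpn x)) n).2 := by
          apply reluPreact_eq_affine
          intro d' i hd'
          simp only [hPext, dif_pos hd', hfpn, decide_eq_true_eq]
        rw [hRP, Set.Finite.mem_toFinset]
        refine ⟨x, ?_⟩
        funext i
        have hr : ((ρ ∘ fps) x).2 i = decide (0 < reluPreact W0 W b x n i) := rfl
        rw [hr, haff]
    have hRPcard : ∀ P, (RP P).card ≤ B := by
      intro P
      rw [hRP, ← Set.ncard_eq_toFinset_card]
      exact core_patterns k m _ (fun i => ⟨fun jj => (affData W0 W b (Pext P) n).1 i jj,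
        (affData W0 W b (Pext P) n).2 i, fun x => by
          simp [Matrix.mulVec, dotProduct]⟩)
    calc (Set.range (ρ ∘ fps)).ncard = SG.card := Set.ncard_eq_toFinset_card _ _
      _ ≤ (SN.biUnion (fun P => {P} ×ˢ RP P)).card := Finset.card_le_card hsub
      _ ≤ ∑ P ∈ SN, ({P} ×ˢ RP P).card := Finset.card_biUnion_le
      _ ≤ ∑ P ∈ SN, B := by
        refine Finset.sum_le_sum (fun P _ => ?_)
        rw [Finset.card_product, Finset.card_singleton, one_mul]
        exact hRPcard P
      _ = SN.card * B := by rw [Finset.sum_const, smul_eq_mul]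
      _ ≤ B ^ n * B := by
        have : SN.card ≤ B ^ n := by
          rw [hSN, ← Set.ncard_eq_toFinset_card]
          exact ih
        exact Nat.mul_le_mul_right _ this
      _ = B ^ (n+1) := by ring

/-- **(Tight) upper bound on the number of activation patterns of a ReLU network.**
For a fully connected ReLU network with `n` hidden layers of width `k` and inputs in `ℝ^m`,
the number of distinct activation patterns realized as the input ranges over all of `ℝ^m`
is at most `(∑_{i=0}^m C(k,i))^n = O(k^{mn})`, for every choice of weights and biases. -/
theorem card_reluActivationPatterns_le (m k n : ℕ)
    (W0 : Matrix (Fin k) (Fin m) ℝ) (W : ℕ → Matrix (Fin k) (Fin k) ℝ)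
    (b : ℕ → Fin k → ℝ) :
    Nat.card (Set.range (reluActivationPattern m k n W0 W b)) ≤
      (∑ i ∈ Finset.range (m + 1), Nat.choose k i) ^ n := by
  rw [Nat.card_coe_set_eq]
  exact main_count W0 W b n
end

section
/- For every real s with 0 < s < 1 and every real x > 0, one has (x + s/2)^{1−s} ≤ Γ(x+1)/Γ(x+s) ≤ (x − 1/2 + (s + 1/4)^{1/2})^{1−s}, where Γ is the Gamma function. -/
open Filter Real Topology Set

/-! Auxiliary lemmas for Kershaw's extension of Gautschi's inequality. -/

private lemma EG.tendsto_ratio (a b : ℝ) :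
    Tendsto (fun y : ℝ => (y + a) / (y + b)) atTop (𝓝 1) := by
  have h : Tendsto (fun y : ℝ => 1 + (a - b) * (y + b)⁻¹) atTop (𝓝 1) := by
    have h1 : Tendsto (fun y : ℝ => (y + b)⁻¹) atTop (𝓝 0) :=
      tendsto_inv_atTop_zero.comp (tendsto_atTop_add_const_right _ b tendsto_id)
    have := (h1.const_mul (a - b)).const_add 1
    simpa using this
  refine h.congr' ?_
  filter_upwards [eventually_gt_atTop (-b)] with y hy
  have hyb : y + b ≠ 0 := by linarith [neg_lt_iff_pos_add.mp hy]
  field_simp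
  ring

private lemma EG.tendsto_log_ratio (a b : ℝ) :
    Tendsto (fun y : ℝ => Real.log ((y + a) / (y + b))) atTop (𝓝 0) := by
  have := (Real.continuousAt_log one_ne_zero).tendsto.comp (EG.tendsto_ratio a b)
  simpa [Function.comp_def] using this

private lemma EG.Gamma_interp (a b t : ℝ) (ha : 0 < a) (hb : 0 < b) (ht0 : 0 ≤ t) (ht1 : t ≤ 1) :
    Real.Gamma ((1 - t) * a + t * b) ≤ Real.Gamma a ^ (1 - t) * Real.Gamma b ^ t := by
  have h := Real.convexOn_log_Gamma.2 (mem_Ioi.mpr ha) (mem_Ioi.mpr hb)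
    (sub_nonneg.mpr ht1) ht0 (by ring)
  simp only [Function.comp_apply, smul_eq_mul] at h
  have hc : 0 < (1 - t) * a + t * b := by
    rcases eq_or_lt_of_le ht0 with h0 | h0
    · simpa [← h0] using ha
    rcases eq_or_lt_of_le ht1 with h1 | h1
    · simpa [h1] using hb
    have h2 := mul_pos (sub_pos.mpr h1) ha
    have h3 := mul_pos h0 hb
    linarith
  have hGa := Real.Gamma_pos_of_pos ha
  have hGb := Real.Gamma_pos_of_pos hb
  have hGc := Real.Gamma_pos_of_pos hc
  calc Real.Gamma ((1 - t) * a + t * b)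
      = Real.exp (Real.log (Real.Gamma ((1 - t) * a + t * b))) := (Real.exp_log hGc).symm
    _ ≤ Real.exp ((1 - t) * Real.log (Real.Gamma a) + t * Real.log (Real.Gamma b)) :=
        Real.exp_le_exp.mpr h
    _ = Real.Gamma a ^ (1 - t) * Real.Gamma b ^ t := by
        rw [Real.exp_add, ← Real.log_rpow hGa, ← Real.log_rpow hGb, Real.exp_log (by positivity),
          Real.exp_log (by positivity)]

private lemma EG.ratio_ge (s y : ℝ) (hs0 : 0 < s) (hs1 : s < 1) (hy : 0 < y) :
    y ^ (1 - s) ≤ Real.Gamma (y + 1) / Real.Gamma (y + s) := by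
  have hG := Real.Gamma_pos_of_pos hy
  have hGs := Real.Gamma_pos_of_pos (by linarith : (0:ℝ) < y + s)
  have key : Real.Gamma (y + s) ≤ Real.Gamma y * y ^ s := by
    have h := EG.Gamma_interp y (y + 1) s hy (by linarith) hs0.le hs1.le
    have he : (1 - s) * y + s * (y + 1) = y + s := by ring
    rw [he] at h
    calc Real.Gamma (y + s) ≤ Real.Gamma y ^ (1 - s) * Real.Gamma (y + 1) ^ s := h
      _ = Real.Gamma y * y ^ s := by
          rw [Real.Gamma_add_one hy.ne', Real.mul_rpow hy.le hG.le]
          rw [mul_comm (y ^ s), ← mul_assoc, ← Real.rpow_add hG, sub_add_cancel,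
            Real.rpow_one]
  rw [Real.Gamma_add_one hy.ne']
  rw [le_div_iff₀ hGs]
  calc y ^ (1 - s) * Real.Gamma (y + s) ≤ y ^ (1 - s) * (Real.Gamma y * y ^ s) :=
        mul_le_mul_of_nonneg_left key (by positivity)
    _ = y * Real.Gamma y := by
        rw [mul_comm (Real.Gamma y), ← mul_assoc, ← Real.rpow_add hy, sub_add_cancel,
          Real.rpow_one]

private lemma EG.ratio_le (s y : ℝ) (hs0 : 0 < s) (hs1 : s < 1) (hy : 0 < y) :
    Real.Gamma (y + 1) / Real.Gamma (y + s) ≤ (y + s) ^ (1 - s) := by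
  have hys : (0:ℝ) < y + s := by linarith
  have hGs := Real.Gamma_pos_of_pos hys
  have h := EG.Gamma_interp (y + s) (y + s + 1) (1 - s) hys (by linarith) (by linarith)
    (by linarith)
  have he : (1 - (1 - s)) * (y + s) + (1 - s) * (y + s + 1) = y + 1 := by ring
  rw [he, sub_sub_cancel] at h
  rw [div_le_iff₀ hGs]
  calc Real.Gamma (y + 1) ≤ Real.Gamma (y + s) ^ s * Real.Gamma (y + s + 1) ^ (1 - s) := h
    _ = (y + s) ^ (1 - s) * Real.Gamma (y + s) := by
        rw [Real.Gamma_add_one hys.ne', Real.mul_rpow hys.le hGs.le]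
        rw [mul_comm (Real.Gamma (y+s) ^ s), mul_assoc, ← Real.rpow_add hGs,
          sub_add_cancel, Real.rpow_one]

private noncomputable def EG.p (s β : ℝ) (y : ℝ) : ℝ :=
  Real.log (y + 1) - Real.log (y + s) -
    (1 - s) * (Real.log (y + β + 1) - Real.log (y + β))

private noncomputable def EG.g (s β : ℝ) (y : ℝ) : ℝ :=
  Real.Gamma (y + 1) / Real.Gamma (y + s) / (y + β) ^ (1 - s)

private lemma EG.hasDerivAt_p (s β : ℝ) (hs0 : 0 < s) (hβ : 0 < β) {y : ℝ} (hy : 0 < y) :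
    HasDerivAt (EG.p s β)
      ((1 - s) * (1 / ((y + β) * (y + β + 1)) - 1 / ((y + 1) * (y + s)))) y := by
  have h1 : (0:ℝ) < y + 1 := by linarith
  have h2 : (0:ℝ) < y + s := by linarith
  have h3 : (0:ℝ) < y + β + 1 := by linarith
  have h4 : (0:ℝ) < y + β := by linarith
  have d1 : HasDerivAt (fun y : ℝ => Real.log (y + 1)) (1 / (y + 1)) y := by
    simpa using ((hasDerivAt_id y).add_const 1).log h1.ne'
  have d2 : HasDerivAt (fun y : ℝ => Real.log (y + s)) (1 / (y + s)) y := by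
    simpa using ((hasDerivAt_id y).add_const s).log h2.ne'
  have d3 : HasDerivAt (fun y : ℝ => Real.log (y + β + 1)) (1 / (y + β + 1)) y := by
    simpa [add_assoc] using
      ((hasDerivAt_id y).add_const (β + 1)).log (ne_of_gt (by simp only [id_eq]; linarith))
  have d4 : HasDerivAt (fun y : ℝ => Real.log (y + β)) (1 / (y + β)) y := by
    simpa using ((hasDerivAt_id y).add_const β).log h4.ne'
  have := (d1.sub d2).sub (((d3.sub d4)).const_mul (1 - s))
  refine this.congr_deriv ?_
  field_simp
  ring

private lemma EG.tendsto_p (s β : ℝ) (hs0 : 0 < s) (hβ : 0 < β) :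
    Tendsto (EG.p s β) atTop (𝓝 0) := by
  have h : Tendsto (fun y : ℝ => Real.log ((y + 1) / (y + s)) -
      (1 - s) * Real.log ((y + β + 1) / (y + β))) atTop (𝓝 (0 - (1 - s) * 0)) := by
    refine (EG.tendsto_log_ratio 1 s).sub ?_
    have := (EG.tendsto_log_ratio (β + 1) β).const_mul (1 - s)
    simpa [add_assoc] using this
  rw [show (0:ℝ) - (1 - s) * 0 = 0 by ring] at h
  refine h.congr' ?_
  filter_upwards [eventually_gt_atTop (0:ℝ)] with y hy
  have h1 : (0:ℝ) < y + 1 := by linarith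
  have h2 : (0:ℝ) < y + s := by linarith
  have h3 : (0:ℝ) < y + β + 1 := by linarith
  have h4 : (0:ℝ) < y + β := by linarith
  rw [Real.log_div h1.ne' h2.ne', Real.log_div h3.ne' h4.ne']
  rfl

private lemma EG.p_nonneg (s β : ℝ) (hs0 : 0 < s) (hs1 : s < 1) (hβ : 0 < β) {x : ℝ}
    (hx : 0 < x)
    (hq : ∀ y : ℝ, x ≤ y → (y + 1) * (y + s) ≤ (y + β) * (y + β + 1)) :
    0 ≤ EG.p s β x := by
  have hanti : AntitoneOn (EG.p s β) (Ici x) := by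
    refine antitoneOn_of_deriv_nonpos (convex_Ici x) ?_ ?_ ?_
    · intro y hy
      exact ((EG.hasDerivAt_p s β hs0 hβ (lt_of_lt_of_le hx hy)).continuousAt).continuousWithinAt
    · intro y hy
      rw [interior_Ici] at hy
      exact ((EG.hasDerivAt_p s β hs0 hβ (hx.trans hy)).differentiableAt).differentiableWithinAt
    · intro y hy
      rw [interior_Ici] at hy
      have hy0 : 0 < y := hx.trans hy
      rw [(EG.hasDerivAt_p s β hs0 hβ hy0).deriv]
      have h1 : (0:ℝ) < (y + 1) * (y + s) := by positivity
      have h2 : (0:ℝ) < (y + β) * (y + β + 1) := by positivity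
      have := one_div_le_one_div_of_le h1 (hq y (le_of_lt hy))
      nlinarith
  have hev : ∀ᶠ y in atTop, EG.p s β y ≤ EG.p s β x := by
    filter_upwards [eventually_ge_atTop x] with y hy
    exact hanti self_mem_Ici hy hy
  exact le_of_tendsto (EG.tendsto_p s β hs0 hβ) hev

private lemma EG.p_nonpos (s β : ℝ) (hs0 : 0 < s) (hs1 : s < 1) (hβ : 0 < β) {x : ℝ}
    (hx : 0 < x)
    (hq : ∀ y : ℝ, x ≤ y → (y + β) * (y + β + 1) ≤ (y + 1) * (y + s)) :
    EG.p s β x ≤ 0 := by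
  have hmono : MonotoneOn (EG.p s β) (Ici x) := by
    refine monotoneOn_of_deriv_nonneg (convex_Ici x) ?_ ?_ ?_
    · intro y hy
      exact ((EG.hasDerivAt_p s β hs0 hβ (lt_of_lt_of_le hx hy)).continuousAt).continuousWithinAt
    · intro y hy
      rw [interior_Ici] at hy
      exact ((EG.hasDerivAt_p s β hs0 hβ (hx.trans hy)).differentiableAt).differentiableWithinAt
    · intro y hy
      rw [interior_Ici] at hy
      have hy0 : 0 < y := hx.trans hy
      rw [(EG.hasDerivAt_p s β hs0 hβ hy0).deriv]
      have h1 : (0:ℝ) < (y + 1) * (y + s) := by positivity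
      have h2 : (0:ℝ) < (y + β) * (y + β + 1) := by positivity
      have := one_div_le_one_div_of_le h2 (hq y (le_of_lt hy))
      nlinarith
  have hev : ∀ᶠ y in atTop, EG.p s β x ≤ EG.p s β y := by
    filter_upwards [eventually_ge_atTop x] with y hy
    exact hmono self_mem_Ici hy hy
  exact ge_of_tendsto (EG.tendsto_p s β hs0 hβ) hev

private lemma EG.rpow_ratio_le (s β y : ℝ) (hs0 : 0 < s) (hs1 : s < 1) (hβ : 0 < β)
    (hy : 0 < y) (hp : 0 ≤ EG.p s β y) :
    ((y + β + 1) / (y + β)) ^ (1 - s) ≤ (y + 1) / (y + s) := by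
  have h1 : (0:ℝ) < y + 1 := by linarith
  have h2 : (0:ℝ) < y + s := by linarith
  have h3 : (0:ℝ) < y + β + 1 := by linarith
  have h4 : (0:ℝ) < y + β := by linarith
  have hrat : (0:ℝ) < (y + β + 1) / (y + β) := by positivity
  have hlog : Real.log (((y + β + 1) / (y + β)) ^ (1 - s)) ≤ Real.log ((y + 1) / (y + s)) := by
    rw [Real.log_rpow hrat, Real.log_div h3.ne' h4.ne', Real.log_div h1.ne' h2.ne']
    unfold EG.p at hp; linarith
  rwa [Real.log_le_log_iff (by positivity) (by positivity)] at hlog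

private lemma EG.rpow_ratio_ge (s β y : ℝ) (hs0 : 0 < s) (hs1 : s < 1) (hβ : 0 < β)
    (hy : 0 < y) (hp : EG.p s β y ≤ 0) :
    (y + 1) / (y + s) ≤ ((y + β + 1) / (y + β)) ^ (1 - s) := by
  have h1 : (0:ℝ) < y + 1 := by linarith
  have h2 : (0:ℝ) < y + s := by linarith
  have h3 : (0:ℝ) < y + β + 1 := by linarith
  have h4 : (0:ℝ) < y + β := by linarith
  have hrat : (0:ℝ) < (y + β + 1) / (y + β) := by positivity
  have hlog : Real.log ((y + 1) / (y + s)) ≤ Real.log (((y + β + 1) / (y + β)) ^ (1 - s)) := by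
    rw [Real.log_rpow hrat, Real.log_div h3.ne' h4.ne', Real.log_div h1.ne' h2.ne']
    unfold EG.p at hp; linarith
  rwa [Real.log_le_log_iff (by positivity) (by positivity)] at hlog

private lemma EG.step_le (s β y : ℝ) (hs0 : 0 < s) (hs1 : s < 1) (hβ : 0 < β) (hy : 0 < y)
    (hp : 0 ≤ EG.p s β y) :
    EG.g s β y ≤ EG.g s β (y + 1) := by
  have h1 : (0:ℝ) < y + 1 := by linarith
  have h2 : (0:ℝ) < y + s := by linarith
  have h4 : (0:ℝ) < y + β := by linarith
  have hG1 := Real.Gamma_pos_of_pos h1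
  have hG2 := Real.Gamma_pos_of_pos h2
  have hR := EG.rpow_ratio_le s β y hs0 hs1 hβ hy hp
  unfold EG.g
  rw [show y + 1 + 1 = (y + 1) + 1 by ring, Real.Gamma_add_one h1.ne',
    show y + 1 + s = (y + s) + 1 by ring, Real.Gamma_add_one h2.ne']
  have hB1 : (0:ℝ) < (y + β) ^ (1 - s) := by positivity
  have hB2 : (0:ℝ) < (y + 1 + β) ^ (1 - s) := by positivity
  rw [div_le_div_iff₀ hB1 hB2]
  have hE : ((y + β + 1) / (y + β)) ^ (1 - s) = (y + 1 + β) ^ (1 - s) / (y + β) ^ (1 - s) := by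
    rw [show y + 1 + β = y + β + 1 by ring, Real.div_rpow (by linarith) h4.le]
  rw [hE, div_le_div_iff₀ hB1 (by positivity)] at hR
  have key : Real.Gamma (y + 1) / Real.Gamma (y + s) * ((y + 1 + β) ^ (1 - s) * (y + s))
      ≤ Real.Gamma (y + 1) / Real.Gamma (y + s) * ((y + 1) * (y + β) ^ (1 - s)) :=
    mul_le_mul_of_nonneg_left hR (by positivity)
  calc Real.Gamma (y + 1) / Real.Gamma (y + s) * (y + 1 + β) ^ (1 - s)
      = Real.Gamma (y + 1) / Real.Gamma (y + s) * ((y + 1 + β) ^ (1 - s) * (y + s)) / (y + s) := by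
        field_simp
    _ ≤ Real.Gamma (y + 1) / Real.Gamma (y + s) * ((y + 1) * (y + β) ^ (1 - s)) / (y + s) :=
        div_le_div_of_nonneg_right key h2.le
    _ = (y + 1) * Real.Gamma (y + 1) / ((y + s) * Real.Gamma (y + s)) * (y + β) ^ (1 - s) := by
        field_simp

private lemma EG.step_ge (s β y : ℝ) (hs0 : 0 < s) (hs1 : s < 1) (hβ : 0 < β) (hy : 0 < y)
    (hp : EG.p s β y ≤ 0) :
    EG.g s β (y + 1) ≤ EG.g s β y := by
  have h1 : (0:ℝ) < y + 1 := by linarith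
  have h2 : (0:ℝ) < y + s := by linarith
  have h4 : (0:ℝ) < y + β := by linarith
  have hG1 := Real.Gamma_pos_of_pos h1
  have hG2 := Real.Gamma_pos_of_pos h2
  have hR := EG.rpow_ratio_ge s β y hs0 hs1 hβ hy hp
  unfold EG.g
  rw [show y + 1 + 1 = (y + 1) + 1 by ring, Real.Gamma_add_one h1.ne',
    show y + 1 + s = (y + s) + 1 by ring, Real.Gamma_add_one h2.ne']
  have hB1 : (0:ℝ) < (y + β) ^ (1 - s) := by positivity
  have hB2 : (0:ℝ) < (y + 1 + β) ^ (1 - s) := by positivity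
  rw [div_le_div_iff₀ hB2 hB1]
  have hE : ((y + β + 1) / (y + β)) ^ (1 - s) = (y + 1 + β) ^ (1 - s) / (y + β) ^ (1 - s) := by
    rw [show y + 1 + β = y + β + 1 by ring, Real.div_rpow (by linarith) h4.le]
  rw [hE, le_div_iff₀ hB1] at hR
  have key : Real.Gamma (y + 1) / Real.Gamma (y + s) * ((y + 1) * (y + β) ^ (1 - s))
      ≤ Real.Gamma (y + 1) / Real.Gamma (y + s) * ((y + 1 + β) ^ (1 - s) * (y + s)) := by
    refine mul_le_mul_of_nonneg_left ?_ (by positivity)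
    calc (y + 1) * (y + β) ^ (1 - s)
        = (y + 1) / (y + s) * (y + β) ^ (1 - s) * (y + s) := by field_simp
      _ ≤ (y + 1 + β) ^ (1 - s) * (y + s) :=
          mul_le_mul_of_nonneg_right hR h2.le
  calc (y + 1) * Real.Gamma (y + 1) / ((y + s) * Real.Gamma (y + s)) * (y + β) ^ (1 - s)
      = Real.Gamma (y + 1) / Real.Gamma (y + s) * ((y + 1) * (y + β) ^ (1 - s)) / (y + s) := by
        field_simp
    _ ≤ Real.Gamma (y + 1) / Real.Gamma (y + s) * ((y + 1 + β) ^ (1 - s) * (y + s)) / (y + s) :=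
        div_le_div_of_nonneg_right key h2.le
    _ = Real.Gamma (y + 1) / Real.Gamma (y + s) * (y + 1 + β) ^ (1 - s) := by
        field_simp

private lemma EG.tendsto_g (s β x : ℝ) (hs0 : 0 < s) (hs1 : s < 1) (hβ : 0 < β) (hx : 0 < x) :
    Tendsto (fun n : ℕ => EG.g s β (x + n)) atTop (𝓝 1) := by
  have hnat : Tendsto (fun n : ℕ => x + (n : ℝ)) atTop atTop :=
    tendsto_atTop_add_const_left _ x tendsto_natCast_atTop_atTop
  have hrpow : ContinuousAt (fun r : ℝ => r ^ (1 - s)) 1 :=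
    Real.continuousAt_rpow_const 1 (1 - s) (Or.inl one_ne_zero)
  have hlow : Tendsto (fun n : ℕ => ((x + n) / (x + n + β)) ^ (1 - s)) atTop (𝓝 1) := by
    have h := hrpow.tendsto.comp (((EG.tendsto_ratio 0 β).comp hnat))
    simpa [Function.comp_def, Real.one_rpow] using h
  have hhigh : Tendsto (fun n : ℕ => ((x + n + s) / (x + n + β)) ^ (1 - s)) atTop (𝓝 1) := by
    have h := hrpow.tendsto.comp (((EG.tendsto_ratio s β).comp hnat))
    simpa [Function.comp_def, Real.one_rpow] using h
  refine tendsto_of_tendsto_of_tendsto_of_le_of_le hlow hhigh ?_ ?_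
  · intro n
    have hy : (0:ℝ) < x + n := by positivity
    have hyβ : (0:ℝ) < x + n + β := by linarith
    dsimp only
    rw [Real.div_rpow hy.le hyβ.le]
    unfold EG.g
    exact div_le_div_of_nonneg_right (EG.ratio_ge s _ hs0 hs1 hy) (by positivity)
  · intro n
    have hy : (0:ℝ) < x + n := by positivity
    have hyβ : (0:ℝ) < x + n + β := by linarith
    dsimp only
    rw [Real.div_rpow (by linarith : (0:ℝ) ≤ x + n + s) hyβ.le]
    unfold EG.g
    exact div_le_div_of_nonneg_right (EG.ratio_le s _ hs0 hs1 hy) (by positivity)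

/-- **An extension of Gautschi's inequality.**
For `0 < s < 1` and `x > 0`,
`(x + s/2)^{1−s} ≤ Γ(x+1)/Γ(x+s) ≤ (x − 1/2 + √(s + 1/4))^{1−s}`. -/
theorem extended_gautschi_inequality (s x : ℝ) (hs0 : 0 < s) (hs1 : s < 1) (hx : 0 < x) :
    (x + s / 2) ^ (1 - s) ≤ Real.Gamma (x + 1) / Real.Gamma (x + s) ∧
    Real.Gamma (x + 1) / Real.Gamma (x + s) ≤
      (x - 1 / 2 + Real.sqrt (s + 1 / 4)) ^ (1 - s) := by
  constructor
  · -- lower bound, β = s/2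
    set β : ℝ := s / 2 with hβdef
    have hβ : 0 < β := by positivity
    have key : ∀ n : ℕ, EG.g s β (x + n) ≤ EG.g s β x := by
      intro n
      induction n with
      | zero => simp
      | succ n ih =>
        have hxn : (0:ℝ) < x + n := by positivity
        have hp : EG.p s β (x + n) ≤ 0 := by
          refine EG.p_nonpos s β hs0 hs1 hβ hxn ?_
          intro y hy
          have hy0 : (0:ℝ) < y := lt_of_lt_of_le hxn hy
          nlinarith
        have hstep := EG.step_ge s β (x + n) hs0 hs1 hβ hxn hp
        calc EG.g s β (x + (n + 1 : ℕ)) = EG.g s β (x + n + 1) := by push_cast; ring_nf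
          _ ≤ EG.g s β (x + n) := hstep
          _ ≤ EG.g s β x := ih
    have hge : 1 ≤ EG.g s β x :=
      le_of_tendsto (EG.tendsto_g s β x hs0 hs1 hβ hx) (Eventually.of_forall key)
    have hB : (0:ℝ) < (x + β) ^ (1 - s) := by positivity
    rw [EG.g, one_le_div hB] at hge
    exact hge
  · -- upper bound, β = √(s+1/4) - 1/2
    set β : ℝ := Real.sqrt (s + 1 / 4) - 1 / 2 with hβdef
    have hsq : Real.sqrt (s + 1 / 4) ^ 2 = s + 1 / 4 := Real.sq_sqrt (by linarith)
    have hsqnn : 0 ≤ Real.sqrt (s + 1 / 4) := Real.sqrt_nonneg _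
    have hβ : 0 < β := by
      have : (1:ℝ) / 2 < Real.sqrt (s + 1 / 4) := by nlinarith
      simp only [hβdef]; linarith
    have hβ1 : β < 1 := by
      have : Real.sqrt (s + 1 / 4) < 3 / 2 := by nlinarith
      simp only [hβdef]; linarith
    have hβs : β ^ 2 + β = s := by simp only [hβdef]; nlinarith
    have key : ∀ n : ℕ, EG.g s β x ≤ EG.g s β (x + n) := by
      intro n
      induction n with
      | zero => simp
      | succ n ih =>
        have hxn : (0:ℝ) < x + n := by positivity
        have hp : 0 ≤ EG.p s β (x + n) := by
          refine EG.p_nonneg s β hs0 hs1 hβ hxn ?_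
          intro y hy
          have hy0 : (0:ℝ) < y := lt_of_lt_of_le hxn hy
          have hh : 0 ≤ β * (1 - β) * y :=
            mul_nonneg (mul_nonneg hβ.le (by linarith)) hy0.le
          nlinarith [hβs, hh]
        have hstep := EG.step_le s β (x + n) hs0 hs1 hβ hxn hp
        calc EG.g s β x ≤ EG.g s β (x + n) := ih
          _ ≤ EG.g s β (x + n + 1) := hstep
          _ = EG.g s β (x + (n + 1 : ℕ)) := by push_cast; ring_nf
    have hle : EG.g s β x ≤ 1 :=
      ge_of_tendsto (EG.tendsto_g s β x hs0 hs1 hβ hx) (Eventually.of_forall key)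
    have hB : (0:ℝ) < (x + β) ^ (1 - s) := by positivity
    rw [EG.g, div_le_one hB] at hle
    have hxe : x - 1 / 2 + Real.sqrt (s + 1 / 4) = x + β := by simp only [hβdef]; ring
    rw [hxe]
    exact hle
end
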